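/- Let λ be the Cauchy probability measure on ℝ and let β ∈ L²(λ) be orthogonal to the translation subspace 𝒯 = span{ ρ ↦ 1, ρ ↦ (ρ²−1)/(ρ²+1), ρ ↦ 2ρ/(ρ²+1) }, i.e. ∫ β t dλ = 0 for each of the three spanning functions t. Then for every g ∈ SL(2,ℝ), the function T′(g)β, defined λ-a.e. by (T′(g)β)(ρ) = κ_g(ρ)^{-2} β(ρ·g), is again orthogonal to 𝒯. Thus the annihilator 𝒮′ of 𝒯 is invariant under the dual action T′ (whereas under T the proper-supertranslation subspace is not invariant). -/

import Mathlib

open MeasureTheory Matrix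

noncomputable section

/-- `SL(2,ℝ)`, the group of real 2×2 matrices of determinant 1. -/
abbrev SL2 := Matrix.SpecialLinearGroup (Fin 2) ℝ

/-- The Cauchy probability measure on `ℝ`, with density `ρ ↦ 1/(π(1+ρ²))` with
respect to Lebesgue measure. -/
def cauchyM : Measure ℝ :=
  volume.withDensity fun ρ => ENNReal.ofReal (1 / (Real.pi * (1 + ρ ^ 2)))

/-- The Möbius right action `ρ·g = (aρ+c)/(bρ+d)` of `g = [[a,b],[c,d]] ∈ SL(2,ℝ)`
on `ℝ` (here `a = g 0 0`, `b = g 0 1`, `c = g 1 0`, `d = g 1 1`). -/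
def mob (g : SL2) (ρ : ℝ) : ℝ :=
  (g.1 0 0 * ρ + g.1 1 0) / (g.1 0 1 * ρ + g.1 1 1)

/-- The factor `κ_g(ρ) = ((aρ+c)² + (bρ+d)²)/(ρ²+1)`. -/
def kappa (g : SL2) (ρ : ℝ) : ℝ :=
  ((g.1 0 0 * ρ + g.1 1 0) ^ 2 + (g.1 0 1 * ρ + g.1 1 1) ^ 2) / (ρ ^ 2 + 1)



lemma w_pos (ρ : ℝ) : 0 < 1 / (Real.pi * (1 + ρ ^ 2)) := by positivity

lemma w_meas : Measurable fun ρ : ℝ => 1 / (Real.pi * (1 + ρ ^ 2)) := by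
  fun_prop

lemma integral_cauchyM (h : ℝ → ℝ) :
    ∫ ρ, h ρ ∂cauchyM = ∫ ρ, (1 / (Real.pi * (1 + ρ ^ 2))) * h ρ := by
  rw [cauchyM]
  rw [show (fun ρ : ℝ => ENNReal.ofReal (1 / (Real.pi * (1 + ρ ^ 2))))
      = fun ρ : ℝ => ((Real.toNNReal (1 / (Real.pi * (1 + ρ ^ 2))) : NNReal) : ENNReal) from rfl]
  rw [integral_withDensity_eq_integral_smul (by fun_prop) h]
  congr 1; ext ρ
  simp [NNReal.smul_def, Real.coe_toNNReal _ (w_pos ρ).le]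
  left; positivity

instance : IsFiniteMeasure cauchyM := by
  constructor
  rw [cauchyM, withDensity_apply _ MeasurableSet.univ, setLIntegral_univ]
  have hi : Integrable (fun ρ : ℝ => 1 / (Real.pi * (1 + ρ ^ 2))) := by
    have := integrable_inv_one_add_sq.const_mul (1 / Real.pi)
    simpa [div_eq_mul_inv, mul_inv, mul_comm] using this
  rw [← ofReal_integral_eq_lintegral_ofReal hi (ae_of_all _ fun ρ => (w_pos ρ).le)]
  exact ENNReal.ofReal_lt_top

lemma quad_bdd (P0 P1 P2 : ℝ) (ρ : ℝ) :
    ‖(P0 + P1 * ρ + P2 * ρ ^ 2) / (ρ ^ 2 + 1)‖ ≤ |P0| + |P1| + |P2| := by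
  have hd : (0:ℝ) < ρ ^ 2 + 1 := by positivity
  rw [Real.norm_eq_abs, abs_div, abs_of_pos hd, div_le_iff₀ hd]
  have h1 : |P0 + P1 * ρ + P2 * ρ ^ 2| ≤ |P0| + |P1| * |ρ| + |P2| * ρ ^ 2 := by
    calc |P0 + P1 * ρ + P2 * ρ ^ 2| ≤ |P0 + P1 * ρ| + |P2 * ρ ^ 2| := abs_add_le _ _
    _ ≤ |P0| + |P1 * ρ| + |P2 * ρ ^ 2| := by gcongr; exact abs_add_le _ _
    _ = |P0| + |P1| * |ρ| + |P2| * ρ ^ 2 := by rw [abs_mul, abs_mul]; rw [abs_of_nonneg (by positivity : (0:ℝ) ≤ ρ^2)]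
  have h2 : |ρ| ≤ ρ ^ 2 + 1 := by nlinarith [sq_abs ρ, sq_nonneg (|ρ| - 1)]
  nlinarith [abs_nonneg P0, abs_nonneg P1, abs_nonneg P2, sq_nonneg ρ]

lemma quad_integrable (β : ℝ → ℝ) (hβ : MemLp β 2 cauchyM) (P0 P1 P2 : ℝ) :
    Integrable (fun ρ => β ρ * ((P0 + P1 * ρ + P2 * ρ ^ 2) / (ρ ^ 2 + 1))) cauchyM := by
  have hβi : Integrable β cauchyM := hβ.integrable one_le_two
  have hc : Continuous fun ρ : ℝ => (P0 + P1 * ρ + P2 * ρ ^ 2) / (ρ ^ 2 + 1) := by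
    apply Continuous.div (by continuity) (by continuity)
    intro ρ; positivity
  have := hβi.bdd_mul hc.aestronglyMeasurable (ae_of_all _ fun ρ => quad_bdd P0 P1 P2 ρ)
  simpa [mul_comm] using this

lemma ortho_quad (β : ℝ → ℝ) (hβ : MemLp β 2 cauchyM)
    (h1 : ∫ ρ, β ρ * 1 ∂cauchyM = 0)
    (h2 : ∫ ρ, β ρ * ((ρ ^ 2 - 1) / (ρ ^ 2 + 1)) ∂cauchyM = 0)
    (h3 : ∫ ρ, β ρ * (2 * ρ / (ρ ^ 2 + 1)) ∂cauchyM = 0)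
    (P0 P1 P2 : ℝ) :
    ∫ ρ, β ρ * ((P0 + P1 * ρ + P2 * ρ ^ 2) / (ρ ^ 2 + 1)) ∂cauchyM = 0 := by
  have key : ∀ ρ : ℝ, β ρ * ((P0 + P1 * ρ + P2 * ρ ^ 2) / (ρ ^ 2 + 1))
      = ((P0 + P2) / 2) * (β ρ * ((1 + 0 * ρ + 1 * ρ ^ 2) / (ρ ^ 2 + 1)))
        + ((P2 - P0) / 2) * (β ρ * ((-1 + 0 * ρ + 1 * ρ ^ 2) / (ρ ^ 2 + 1)))
        + (P1 / 2) * (β ρ * ((0 + 2 * ρ + 0 * ρ ^ 2) / (ρ ^ 2 + 1))) := by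
    intro ρ
    have hd : (ρ:ℝ) ^ 2 + 1 ≠ 0 := by positivity
    field_simp
    ring
  have e1 : ∫ ρ, β ρ * ((1 + 0 * ρ + 1 * ρ ^ 2) / (ρ ^ 2 + 1)) ∂cauchyM = 0 := by
    have e : ∫ ρ, β ρ * ((1 + 0 * ρ + 1 * ρ ^ 2) / (ρ ^ 2 + 1)) ∂cauchyM
        = ∫ ρ, β ρ * 1 ∂cauchyM := by
      apply integral_congr_ae; filter_upwards with ρ
      have hd : (ρ:ℝ) ^ 2 + 1 ≠ 0 := by positivity
      congr 1; field_simp; ring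
    rw [e, h1]
  have e2 : ∫ ρ, β ρ * ((-1 + 0 * ρ + 1 * ρ ^ 2) / (ρ ^ 2 + 1)) ∂cauchyM = 0 := by
    have e : ∫ ρ, β ρ * ((-1 + 0 * ρ + 1 * ρ ^ 2) / (ρ ^ 2 + 1)) ∂cauchyM
        = ∫ ρ, β ρ * ((ρ ^ 2 - 1) / (ρ ^ 2 + 1)) ∂cauchyM := by
      apply integral_congr_ae; filter_upwards with ρ
      congr 2; ring
    rw [e, h2]
  have e3 : ∫ ρ, β ρ * ((0 + 2 * ρ + 0 * ρ ^ 2) / (ρ ^ 2 + 1)) ∂cauchyM = 0 := by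
    have e : ∫ ρ, β ρ * ((0 + 2 * ρ + 0 * ρ ^ 2) / (ρ ^ 2 + 1)) ∂cauchyM
        = ∫ ρ, β ρ * (2 * ρ / (ρ ^ 2 + 1)) ∂cauchyM := by
      apply integral_congr_ae; filter_upwards with ρ
      congr 2; ring
    rw [e, h3]
  calc ∫ ρ, β ρ * ((P0 + P1 * ρ + P2 * ρ ^ 2) / (ρ ^ 2 + 1)) ∂cauchyM
      = ∫ ρ, (((P0 + P2) / 2) * (β ρ * ((1 + 0 * ρ + 1 * ρ ^ 2) / (ρ ^ 2 + 1)))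
        + ((P2 - P0) / 2) * (β ρ * ((-1 + 0 * ρ + 1 * ρ ^ 2) / (ρ ^ 2 + 1)))
        + (P1 / 2) * (β ρ * ((0 + 2 * ρ + 0 * ρ ^ 2) / (ρ ^ 2 + 1)))) ∂cauchyM := by
        apply integral_congr_ae; filter_upwards with ρ; exact key ρ
    _ = 0 := by
        rw [integral_add, integral_add, integral_const_mul, integral_const_mul,
          integral_const_mul, e1, e2, e3]
        · ring
        · exact (quad_integrable β hβ 1 0 1).const_mul _
        · exact (quad_integrable β hβ (-1) 0 1).const_mul _
        · exact ((quad_integrable β hβ 1 0 1).const_mul _).add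
            ((quad_integrable β hβ (-1) 0 1).const_mul _)
        · exact (quad_integrable β hβ 0 2 0).const_mul _

lemma null_line (u v : ℝ) (h : u ≠ 0 ∨ v ≠ 0) : volume {ρ : ℝ | u * ρ + v = 0} = 0 := by
  apply Set.Countable.measure_zero
  apply Set.Subsingleton.countable
  intro x hx y hy
  rcases eq_or_ne u 0 with hu | hu
  · exfalso
    rcases h with h | h
    · exact h hu
    · simp only [Set.mem_setOf_eq, hu, zero_mul, zero_add] at hx
      exact h hx
  · have hx' : u * x + v = 0 := hx
    have hy' : u * y + v = 0 := hy
    have : u * x = u * y := by linarith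
    exact mul_left_cancel₀ hu this

lemma mobius_cov (a b c d : ℝ) (hdet : a * d - b * c = 1) (G : ℝ → ℝ) :
    ∫ σ, G σ = ∫ ρ, |((b * ρ + d) ^ 2)⁻¹| * G ((a * ρ + c) / (b * ρ + d)) := by
  set φ : ℝ → ℝ := fun ρ => (a * ρ + c) / (b * ρ + d) with hφ
  set s : Set ℝ := {ρ | b * ρ + d ≠ 0} with hs_def
  have hso : IsOpen s := isOpen_compl_iff.mpr (isClosed_eq (by continuity) continuous_const)
  have hs : MeasurableSet s := hso.measurableSet
  have hbd : b ≠ 0 ∨ d ≠ 0 := by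
    rcases eq_or_ne b 0 with hb | hb
    · right; intro hd; rw [hb, hd] at hdet; simp at hdet
    · left; exact hb
  have hscnull : volume sᶜ = 0 := by
    have : sᶜ = {ρ : ℝ | b * ρ + d = 0} := by
      ext ρ; simp [hs_def]
    rw [this]; exact null_line b d hbd
  have hba : b ≠ 0 ∨ a ≠ 0 := by
    rcases eq_or_ne b 0 with hb | hb
    · right; intro ha; rw [hb, ha] at hdet; simp at hdet
    · left; exact hb
  -- derivative
  have hderiv : ∀ x ∈ s, HasDerivWithinAt φ (((b * x + d) ^ 2)⁻¹) s x := by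
    intro x hx
    have hx' : b * x + d ≠ 0 := hx
    have h1 : HasDerivAt (fun ρ : ℝ => a * ρ + c) a x := by
      simpa using ((hasDerivAt_id x).const_mul a).add_const c
    have h2 : HasDerivAt (fun ρ : ℝ => b * ρ + d) b x := by
      simpa using ((hasDerivAt_id x).const_mul b).add_const d
    have := h1.div h2 hx'
    have heq : (a * (b * x + d) - (a * x + c) * b) / (b * x + d) ^ 2
        = ((b * x + d) ^ 2)⁻¹ := by
      rw [div_eq_iff (by positivity), inv_mul_cancel₀ (by positivity)]
      linear_combination hdet
    rw [heq] at this
    exact this.hasDerivWithinAt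
  -- injectivity
  have hinj : Set.InjOn φ s := by
    intro x hx y hy hxy
    have hx' : b * x + d ≠ 0 := hx
    have hy' : b * y + d ≠ 0 := hy
    rw [hφ] at hxy
    simp only at hxy
    rw [div_eq_div_iff hx' hy'] at hxy
    have : (a * x + c) * (b * y + d) - (a * y + c) * (b * x + d) = 0 := by
      rw [hxy]; ring
    nlinarith [hdet]
  -- image covers a.e.
  have himage : {σ : ℝ | a - b * σ ≠ 0} ⊆ φ '' s := by
    intro σ hσ
    have hσ' : a - b * σ ≠ 0 := hσ
    have key : b * ((d * σ - c) / (a - b * σ)) + d = (a - b * σ)⁻¹ := by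
      field_simp
      linear_combination hdet
    have keyn : a * ((d * σ - c) / (a - b * σ)) + c = σ * (a - b * σ)⁻¹ := by
      rw [mul_div_assoc', div_add' _ _ _ hσ', ← div_eq_mul_inv, div_left_inj' hσ']
      linear_combination σ * hdet
    refine ⟨(d * σ - c) / (a - b * σ), ?_, ?_⟩
    · show b * ((d * σ - c) / (a - b * σ)) + d ≠ 0
      rw [key]; exact inv_ne_zero hσ'
    · show (a * ((d * σ - c) / (a - b * σ)) + c) / (b * ((d * σ - c) / (a - b * σ)) + d) = σ
      rw [key, keyn, mul_div_assoc, div_self (inv_ne_zero hσ'), mul_one]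
  have himgnull : volume (φ '' s)ᶜ = 0 := by
    have hsub : (φ '' s)ᶜ ⊆ {σ : ℝ | (-b) * σ + a = 0} := by
      intro σ hσ
      by_contra hne
      have : a - b * σ ≠ 0 := fun h => hne (by simp only [Set.mem_setOf_eq]; linarith)
      exact hσ (himage this)
    exact measure_mono_null hsub (null_line (-b) a (by
        rcases hba with h | h
        · left; simpa using h
        · right; exact h))
  have hres1 : volume.restrict (φ '' s) = volume := by
    apply Measure.restrict_eq_self_of_ae_mem
    rw [ae_iff]
    exact himgnull
  have hres2 : volume.restrict s = volume := by
    apply Measure.restrict_eq_self_of_ae_mem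
    rw [ae_iff]
    exact hscnull
  calc ∫ σ, G σ = ∫ σ in φ '' s, G σ := by rw [hres1]
    _ = ∫ ρ in s, |((b * ρ + d) ^ 2)⁻¹| • G (φ ρ) :=
        integral_image_eq_integral_abs_deriv_smul hs hderiv hinj G
    _ = ∫ ρ, |((b * ρ + d) ^ 2)⁻¹| * G ((a * ρ + c) / (b * ρ + d)) := by
        rw [hres2]; simp [smul_eq_mul, hφ]

theorem ortho_master
    (β : ℝ → ℝ) (hβ : MemLp β 2 cauchyM)
    (h1 : ∫ ρ, β ρ * 1 ∂cauchyM = 0)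
    (h2 : ∫ ρ, β ρ * ((ρ ^ 2 - 1) / (ρ ^ 2 + 1)) ∂cauchyM = 0)
    (h3 : ∫ ρ, β ρ * (2 * ρ / (ρ ^ 2 + 1)) ∂cauchyM = 0)
    (g : SL2) (p0 p1 p2 : ℝ) :
    ∫ ρ, (kappa g ρ ^ 2)⁻¹ * β (mob g ρ) * ((p0 + p1 * ρ + p2 * ρ ^ 2) / (ρ ^ 2 + 1)) ∂cauchyM
      = 0 := by
  set a := g.1 0 0 with ha
  set b := g.1 0 1 with hb
  set c := g.1 1 0 with hc
  set d := g.1 1 1 with hd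
  have hdet : a * d - b * c = 1 := by
    have hg := g.2
    rw [Matrix.det_fin_two] at hg
    exact hg
  have hbd : b ≠ 0 ∨ d ≠ 0 := by
    rcases eq_or_ne b 0 with hb0 | hb0
    · right; intro hd0; rw [hb0, hd0] at hdet; simp at hdet
    · left; exact hb0
  have hae : ∀ᵐ ρ : ℝ, b * ρ + d ≠ 0 := by
    rw [ae_iff]
    simp only [not_not]
    exact null_line b d hbd
  set G : ℝ → ℝ := fun σ => (1 / (Real.pi * (1 + σ ^ 2))) *
      (β σ * ((p0 * (a - b * σ) ^ 2 + p1 * (d * σ - c) * (a - b * σ)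
        + p2 * (d * σ - c) ^ 2) / (σ ^ 2 + 1))) with hG
  have step1 : ∫ ρ, (1 / (Real.pi * (1 + ρ ^ 2)))
        * ((kappa g ρ ^ 2)⁻¹ * β (mob g ρ) * ((p0 + p1 * ρ + p2 * ρ ^ 2) / (ρ ^ 2 + 1)))
      = ∫ ρ, |((b * ρ + d) ^ 2)⁻¹| * G ((a * ρ + c) / (b * ρ + d)) := by
    apply integral_congr_ae
    filter_upwards [hae] with ρ hρ
    have hmob : mob g ρ = (a * ρ + c) / (b * ρ + d) := rfl
    have hkap : kappa g ρ = ((a * ρ + c) ^ 2 + (b * ρ + d) ^ 2) / (ρ ^ 2 + 1) := rfl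
    have h2p : (0:ℝ) < (b * ρ + d) ^ 2 :=
      lt_of_le_of_ne (sq_nonneg _) (Ne.symm (pow_ne_zero 2 hρ))
    have hNp : (0:ℝ) < (a * ρ + c) ^ 2 + (b * ρ + d) ^ 2 := by nlinarith [sq_nonneg (a * ρ + c)]
    have hA : a - b * ((a * ρ + c) / (b * ρ + d)) = (b * ρ + d)⁻¹ := by
      field_simp
      linear_combination hdet
    have hD : d * ((a * ρ + c) / (b * ρ + d)) - c = ρ * (b * ρ + d)⁻¹ := by
      rw [mul_div_assoc', div_sub' hρ, ← div_eq_mul_inv, div_left_inj' hρ]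
      linear_combination ρ * hdet
    have hS : ((a * ρ + c) / (b * ρ + d)) ^ 2 + 1
        = ((a * ρ + c) ^ 2 + (b * ρ + d) ^ 2) / (b * ρ + d) ^ 2 := by
      rw [div_pow, div_add_one (pow_ne_zero 2 hρ)]
    have h1S : 1 + ((a * ρ + c) / (b * ρ + d)) ^ 2
        = ((a * ρ + c) ^ 2 + (b * ρ + d) ^ 2) / (b * ρ + d) ^ 2 := by
      rw [div_pow, one_add_div (pow_ne_zero 2 hρ)]
      ring
    rw [hG]
    simp only
    rw [hmob, hkap, hA, hD, hS, h1S, abs_of_pos (inv_pos.mpr h2p)]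
    have hπ : Real.pi ≠ 0 := Real.pi_ne_zero
    have hρ2 : (ρ:ℝ) ^ 2 + 1 ≠ 0 := by positivity
    generalize β ((a * ρ + c) / (b * ρ + d)) = B
    have hN0 : (a * ρ + c) ^ 2 + (b * ρ + d) ^ 2 ≠ 0 := hNp.ne'
    generalize (a * ρ + c) ^ 2 + (b * ρ + d) ^ 2 = N at hN0 ⊢
    generalize b * ρ + d = u at hρ ⊢
    field_simp
    ring
  have step3 : ∫ σ, G σ
      = ∫ σ, β σ * ((p0 * (a - b * σ) ^ 2 + p1 * (d * σ - c) * (a - b * σ)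
        + p2 * (d * σ - c) ^ 2) / (σ ^ 2 + 1)) ∂cauchyM := by
    rw [integral_cauchyM]
  have step4 : ∫ σ, β σ * ((p0 * (a - b * σ) ^ 2 + p1 * (d * σ - c) * (a - b * σ)
        + p2 * (d * σ - c) ^ 2) / (σ ^ 2 + 1)) ∂cauchyM = 0 := by
    have e : ∫ σ, β σ * ((p0 * (a - b * σ) ^ 2 + p1 * (d * σ - c) * (a - b * σ)
          + p2 * (d * σ - c) ^ 2) / (σ ^ 2 + 1)) ∂cauchyM
        = ∫ σ, β σ * (((p0 * a ^ 2 - p1 * a * c + p2 * c ^ 2)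
            + (-2 * p0 * a * b + p1 * (a * d + b * c) - 2 * p2 * c * d) * σ
            + (p0 * b ^ 2 - p1 * b * d + p2 * d ^ 2) * σ ^ 2) / (σ ^ 2 + 1)) ∂cauchyM := by
      apply integral_congr_ae
      filter_upwards with σ
      congr 2
      ring
    rw [e]
    exact ortho_quad β hβ h1 h2 h3 _ _ _
  rw [integral_cauchyM, step1, ← mobius_cov a b c d hdet G, step3, step4]

/-- If `β ∈ L²(λ)` is orthogonal to the translation subspace
`𝒯 = span{ρ ↦ 1, ρ ↦ (ρ²−1)/(ρ²+1), ρ ↦ 2ρ/(ρ²+1)}`, then for every `g ∈ SL(2,ℝ)`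
the function `T′(g)β`, `(T′(g)β)(ρ) = κ_g(ρ)⁻² β(ρ·g)`, is again orthogonal to `𝒯`:
the annihilator `𝒮′` of `𝒯` is invariant under the dual action `T′`. -/
theorem dual_action_preserves_annihilator_of_translations
    (β : ℝ → ℝ) (hβ : MemLp β 2 cauchyM)
    (h1 : ∫ ρ, β ρ * 1 ∂cauchyM = 0)
    (h2 : ∫ ρ, β ρ * ((ρ ^ 2 - 1) / (ρ ^ 2 + 1)) ∂cauchyM = 0)
    (h3 : ∫ ρ, β ρ * (2 * ρ / (ρ ^ 2 + 1)) ∂cauchyM = 0) :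
    ∀ g : SL2,
      (∫ ρ, (kappa g ρ ^ 2)⁻¹ * β (mob g ρ) * 1 ∂cauchyM = 0) ∧
      (∫ ρ, (kappa g ρ ^ 2)⁻¹ * β (mob g ρ) * ((ρ ^ 2 - 1) / (ρ ^ 2 + 1)) ∂cauchyM = 0) ∧
      (∫ ρ, (kappa g ρ ^ 2)⁻¹ * β (mob g ρ) * (2 * ρ / (ρ ^ 2 + 1)) ∂cauchyM = 0) := by
  intro g
  have conv1 : ∫ ρ, (kappa g ρ ^ 2)⁻¹ * β (mob g ρ) * 1 ∂cauchyM
      = ∫ ρ, (kappa g ρ ^ 2)⁻¹ * β (mob g ρ)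
          * ((1 + 0 * ρ + 1 * ρ ^ 2) / (ρ ^ 2 + 1)) ∂cauchyM := by
    apply integral_congr_ae; filter_upwards with ρ
    have hρ2 : (ρ:ℝ) ^ 2 + 1 ≠ 0 := by positivity
    congr 1
    rw [eq_comm, div_eq_one_iff_eq hρ2]; ring
  have conv2 : ∫ ρ, (kappa g ρ ^ 2)⁻¹ * β (mob g ρ) * ((ρ ^ 2 - 1) / (ρ ^ 2 + 1)) ∂cauchyM
      = ∫ ρ, (kappa g ρ ^ 2)⁻¹ * β (mob g ρ)
          * ((-1 + 0 * ρ + 1 * ρ ^ 2) / (ρ ^ 2 + 1)) ∂cauchyM := by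
    apply integral_congr_ae; filter_upwards with ρ
    congr 2; ring
  have conv3 : ∫ ρ, (kappa g ρ ^ 2)⁻¹ * β (mob g ρ) * (2 * ρ / (ρ ^ 2 + 1)) ∂cauchyM
      = ∫ ρ, (kappa g ρ ^ 2)⁻¹ * β (mob g ρ)
          * ((0 + 2 * ρ + 0 * ρ ^ 2) / (ρ ^ 2 + 1)) ∂cauchyM := by
    apply integral_congr_ae; filter_upwards with ρ
    congr 2; ring
  exact ⟨by rw [conv1]; exact ortho_master β hβ h1 h2 h3 g 1 0 1,
    by rw [conv2]; exact ortho_master β hβ h1 h2 h3 g (-1) 0 1,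
    by rw [conv3]; exact ortho_master β hβ h1 h2 h3 g 0 2 0⟩
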